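/- Let n be a positive integer, η > 0, Y ∈ ℝⁿ, K_x ∈ ℝ^{n×n} symmetric, and let q ∈ ℝⁿ be a unit eigenvector of K_x with eigenvalue λ, i.e. K_x q = λ q. Let c ∈ ℝ with c ≠ 0 and v ∈ ℝⁿ; set F = c·v, E = F − Y, c' = c − (η/n)·⟨E, v⟩, v' = v − (η/n)·c·(K_x E), and E' = c'·v' − Y. Then ⟨E', q⟩ = ( 1 − (ηλ/n)·c² − (η/(n c²))·⟨E, F⟩ + (η²λ/n²)·⟨E, F⟩ )·⟨E, q⟩ − (η/(n c²))·⟨E, F⟩·⟨Y, q⟩. -/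

import Mathlib

open Matrix

/-- Exact one-step recursion for the error component along a kernel
eigendirection under the rank-1 gradient-descent dynamics. -/
theorem error_component_one_step_recursion
    (n : ℕ) (hn : 0 < n) (η : ℝ) (hη : 0 < η)
    (Y : Fin n → ℝ) (Kx : Matrix (Fin n) (Fin n) ℝ) (hK : Kx.IsSymm)
    (q : Fin n → ℝ) (hq : q ⬝ᵥ q = 1)
    (lam : ℝ) (heig : Kx.mulVec q = lam • q)
    (c : ℝ) (hc : c ≠ 0) (v : Fin n → ℝ)
    (F E : Fin n → ℝ) (hF : F = c • v) (hE : E = F - Y)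
    (c' : ℝ) (hc' : c' = c - (η / n) * (E ⬝ᵥ v))
    (v' : Fin n → ℝ) (hv' : v' = v - ((η / n) * c) • Kx.mulVec E)
    (E' : Fin n → ℝ) (hE' : E' = c' • v' - Y) :
    E' ⬝ᵥ q =
      (1 - (η * lam / n) * c ^ 2 - (η / (n * c ^ 2)) * (E ⬝ᵥ F)
          + (η ^ 2 * lam / n ^ 2) * (E ⬝ᵥ F)) * (E ⬝ᵥ q)
        - (η / (n * c ^ 2)) * (E ⬝ᵥ F) * (Y ⬝ᵥ q) := by
  have hn' : (n : ℝ) ≠ 0 := by positivity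
  have hKq : (Kx.mulVec E) ⬝ᵥ q = lam * (E ⬝ᵥ q) := by
    rw [dotProduct_comm, dotProduct_mulVec, ← mulVec_transpose, hK.eq, heig,
      smul_dotProduct, smul_eq_mul, dotProduct_comm]
  have hEv : E ⬝ᵥ v = (E ⬝ᵥ F) / c := by
    rw [hF, dotProduct_smul, smul_eq_mul]
    field_simp
  have hFq : F ⬝ᵥ q = (E ⬝ᵥ q) + (Y ⬝ᵥ q) := by
    rw [hE, sub_dotProduct]; ring
  have hvq : v ⬝ᵥ q = ((E ⬝ᵥ q) + (Y ⬝ᵥ q)) / c := by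
    rw [← hFq, hF, smul_dotProduct, smul_eq_mul]
    field_simp
  rw [hE', sub_dotProduct, smul_dotProduct, hv', sub_dotProduct, smul_dotProduct,
    hKq, hc', hEv, hvq, smul_eq_mul]
  field_simp
  linear_combination (c ^ 2 * η ^ 2 * (E ⬝ᵥ F) * (E ⬝ᵥ q) * lam - (n : ℝ) * c ^ 4 * η * (E ⬝ᵥ q) * lam) * mul_inv_cancel₀ hn'
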